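/- arXiv:2007.10976 — 2 statements merged into one kernel-verified Lean document; each statement's English description precedes it below -/
import Mathlib

section
/- Let k ≥ 1 and η = 1/√k, and let 𝒲 = {W_u^{1/√k} : u ∈ [0,1]^{2k}} be the family of all leaky-query channels with this leakage parameter. Then 2 ≤ ‖𝒲‖_F ≤ 2√2, 2√k ≤ ‖𝒲‖_* ≤ 2√k + 2, and ‖𝒲‖_op = 2. -/
open Finset

namespace Paper

/-- A probability distribution on a finite type, given by its mass function. -/
def IsDist {α : Type*} [Fintype α] (p : α → ℝ) : Prop :=
  (∀ a, 0 ≤ p a) ∧ ∑ a, p a = 1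

/-- A channel (row-stochastic kernel) from `α` to the finite alphabet `𝒴`. -/
def IsChannel {α 𝒴 : Type*} [Fintype α] [Fintype 𝒴] (W : α → 𝒴 → ℝ) : Prop :=
  ∀ x, IsDist (W x)

/-- Total variation distance between mass functions on a finite type. -/
noncomputable def tvDist {α : Type*} [Fintype α] (p q : α → ℝ) : ℝ :=
  (∑ a, |p a - q a|) / 2

/-- The element `2i-1` (1-indexed) of `[2k]`, i.e. index `2i` in 0-indexed terms. -/
def lo {k : ℕ} (i : Fin k) : Fin (2 * k) := ⟨2 * i.val, by have := i.isLt; omega⟩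

/-- The element `2i` (1-indexed) of `[2k]`, i.e. index `2i+1` in 0-indexed terms. -/
def hi {k : ℕ} (i : Fin k) : Fin (2 * k) := ⟨2 * i.val + 1, by have := i.isLt; omega⟩

/-- The channel information matrix `H(W)`  (division by `0` yields `0` in Lean,
matching the convention that terms with zero denominator vanish). -/
noncomputable def HMat (k : ℕ) {𝒴 : Type*} [Fintype 𝒴] (W : Fin (2 * k) → 𝒴 → ℝ) :
    Matrix (Fin k) (Fin k) ℝ := fun i j =>
  ∑ y, (W (lo i) y - W (hi i) y) * (W (lo j) y - W (hi j) y) / (∑ x, W x y)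

/-- Nuclear norm of a real symmetric matrix (sum of absolute values of eigenvalues). -/
noncomputable def nucNorm {k : ℕ} (A : Matrix (Fin k) (Fin k) ℝ) : ℝ :=
  if h : A.IsHermitian then ∑ i, |h.eigenvalues i| else 0

/-- Operator (spectral) norm of a real symmetric matrix. -/
noncomputable def opNorm {k : ℕ} (A : Matrix (Fin k) (Fin k) ℝ) : ℝ :=
  if h : A.IsHermitian then ⨆ i, |h.eigenvalues i| else 0

/-- Frobenius norm of a matrix. -/
noncomputable def frobNorm {k : ℕ} (A : Matrix (Fin k) (Fin k) ℝ) : ℝ :=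
  Real.sqrt (∑ i, ∑ j, (A i j) ^ 2)

/-- `‖𝒲‖_*`, the maximal nuclear norm of `H(W)` over the family. -/
noncomputable def famNuc (k : ℕ) {𝒴 : Type*} [Fintype 𝒴]
    (𝒲 : Set (Fin (2 * k) → 𝒴 → ℝ)) : ℝ :=
  sSup ((fun W => nucNorm (HMat k W)) '' 𝒲)

/-- `‖𝒲‖_op`, the maximal operator norm of `H(W)` over the family. -/
noncomputable def famOp (k : ℕ) {𝒴 : Type*} [Fintype 𝒴]
    (𝒲 : Set (Fin (2 * k) → 𝒴 → ℝ)) : ℝ :=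
  sSup ((fun W => opNorm (HMat k W)) '' 𝒲)

/-- `‖𝒲‖_F`, the maximal Frobenius norm of `H(W)` over the family. -/
noncomputable def famFrob (k : ℕ) {𝒴 : Type*} [Fintype 𝒴]
    (𝒲 : Set (Fin (2 * k) → 𝒴 → ℝ)) : ℝ :=
  sSup ((fun W => frobNorm (HMat k W)) '' 𝒲)

/-- A deterministic sequentially interactive protocol over `n` users: to each user `t`
and each message prefix it assigns a channel. -/
def Protocol (k n : ℕ) (𝒴 : Type*) : Type _ :=
  (t : Fin n) → (Fin t.val → 𝒴) → Fin (2 * k) → 𝒴 → ℝ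

/-- All channels used by the protocol belong to the family `𝒲`. -/
def UsesFamily {k n : ℕ} {𝒴 : Type*} (π : Protocol k n 𝒴)
    (𝒲 : Set (Fin (2 * k) → 𝒴 → ℝ)) : Prop :=
  ∀ t pre, π t pre ∈ 𝒲

/-- All kernels used by the protocol are genuine channels. -/
def ChannelProtocol {k n : ℕ} {𝒴 : Type*} [Fintype 𝒴] (π : Protocol k n 𝒴) : Prop :=
  ∀ t pre, IsChannel (π t pre)

/-- Distribution of the first `t` messages of the transcript when the inputs are
i.i.d. with law `p`. -/
noncomputable def prefixDist {k n : ℕ} {𝒴 : Type*} [Fintype 𝒴] (π : Protocol k n 𝒴)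
    (p : Fin (2 * k) → ℝ) (t : ℕ) (ht : t ≤ n) (y : Fin t → 𝒴) : ℝ :=
  ∏ s : Fin t, ∑ x, p x *
    π ⟨s.val, lt_of_lt_of_le s.isLt ht⟩ (fun r => y ⟨r.val, lt_trans r.isLt s.isLt⟩) x (y s)

/-- Distribution of the full transcript `Y^n` when the inputs are i.i.d. with law `p`. -/
noncomputable def transDist {k n : ℕ} {𝒴 : Type*} [Fintype 𝒴] (π : Protocol k n 𝒴)
    (p : Fin (2 * k) → ℝ) (y : Fin n → 𝒴) : ℝ :=
  prefixDist π p n le_rfl y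

/-- The uniform distribution on `[2k]`. -/
noncomputable def uniform2k (k : ℕ) : Fin (2 * k) → ℝ := fun _ => (2 * (k : ℝ))⁻¹

/-- An `(n, ε)`-estimator using `𝒲`: a public-coin sequentially interactive protocol
(seed distribution `μ`, protocols `π u`, channels from `𝒲`) together with an estimator
`est` such that, for every input distribution `p`, the probability that the estimate is
more than `ε` away from `p` in total variation is at most `1/100`. -/
def IsEstimator {k n : ℕ} {𝒴 𝒰 : Type*} [Fintype 𝒴] [Fintype 𝒰]
    (𝒲 : Set (Fin (2 * k) → 𝒴 → ℝ)) (μ : 𝒰 → ℝ) (π : 𝒰 → Protocol k n 𝒴)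
    (est : (Fin n → 𝒴) → 𝒰 → Fin (2 * k) → ℝ) (ε : ℝ) : Prop :=
  IsDist μ ∧ (∀ u, UsesFamily (π u) 𝒲) ∧ (∀ u, ChannelProtocol (π u)) ∧
  (∀ y u, IsDist (est y u)) ∧
  ∀ p : Fin (2 * k) → ℝ, IsDist p →
    (∑ u, ∑ y : Fin n → 𝒴, μ u * (transDist (π u) p y *
      (if ε < tvDist (est y u) p then (1 : ℝ) else 0))) ≤ 1 / 100

/-- An `(n, ε)`-uniformity test using `𝒲`: a public-coin sequentially interactive
protocol together with a randomized decision rule `T` (probability of output `1`)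
accepting uniform and rejecting `ε`-far distributions with probability `99/100`. -/
def IsUnifTest {k n : ℕ} {𝒴 𝒰 : Type*} [Fintype 𝒴] [Fintype 𝒰]
    (𝒲 : Set (Fin (2 * k) → 𝒴 → ℝ)) (μ : 𝒰 → ℝ) (π : 𝒰 → Protocol k n 𝒴)
    (T : (Fin n → 𝒴) → 𝒰 → ℝ) (ε : ℝ) : Prop :=
  IsDist μ ∧ (∀ u, UsesFamily (π u) 𝒲) ∧ (∀ u, ChannelProtocol (π u)) ∧
  (∀ y u, T y u ∈ Set.Icc (0 : ℝ) 1) ∧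
  (99 / 100 ≤ ∑ u, ∑ y : Fin n → 𝒴, μ u * (transDist (π u) (uniform2k k) y * (1 - T y u))) ∧
  ∀ p : Fin (2 * k) → ℝ, IsDist p → ε ≤ tvDist p (uniform2k k) →
    99 / 100 ≤ ∑ u, ∑ y : Fin n → 𝒴, μ u * (transDist (π u) p y * T y u)

/-- Mutual information (in nats) of a joint mass function on `A × B`. -/
noncomputable def miNats {A B : Type*} [Fintype A] [Fintype B] (j : A → B → ℝ) : ℝ :=
  ∑ a, ∑ b, j a b * Real.log (j a b / ((∑ b', j a b') * (∑ a', j a' b)))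

/-- Mutual information (in bits) of a joint mass function on `A × B`. -/
noncomputable def miBits {A B : Type*} [Fintype A] [Fintype B] (j : A → B → ℝ) : ℝ :=
  ∑ a, ∑ b, j a b * Real.logb 2 (j a b / ((∑ b', j a b') * (∑ a', j a' b)))

/-- Binary entropy function (in bits). -/
noncomputable def binEnt (t : ℝ) : ℝ :=
  -(t * Real.logb 2 t) - (1 - t) * Real.logb 2 (1 - t)

/-- `±1` encoding of a Boolean. -/
def pm (b : Bool) : ℝ := if b then 1 else -1

/-- The joint mass function of `(Z_i, Y)` obtained from a joint mass function of `(Z, Y)`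
for `Z ∈ {−1,+1}^k` (encoded via Booleans). -/
noncomputable def coordJoint {k : ℕ} {𝒴 : Type*} [Fintype 𝒴]
    (j : (Fin k → Bool) → 𝒴 → ℝ) (i : Fin k) : Bool → 𝒴 → ℝ :=
  fun b y => ∑ z : Fin k → Bool, if z i = b then j z y else 0

/-- The Paninski perturbation `p_z` of the uniform distribution on `[2k]`:
`p_z(2i−1) = (1+2ε z_i)/(2k)` and `p_z(2i) = (1−2ε z_i)/(2k)` (1-indexed). -/
noncomputable def paninski (k : ℕ) (ε : ℝ) (z : Fin k → Bool) : Fin (2 * k) → ℝ :=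
  fun x => (1 + (if x.val % 2 = 0 then (1 : ℝ) else -1) * (2 * ε) *
    pm (z ⟨x.val / 2, by have := x.isLt; omega⟩)) / (2 * k)

/-- Chi-square divergence between mass functions on a finite type. -/
noncomputable def chiSq {α : Type*} [Fintype α] (P Q : α → ℝ) : ℝ :=
  ∑ y, (P y - Q y) ^ 2 / Q y

/-- Kullback–Leibler divergence (in nats) between mass functions on a finite type. -/
noncomputable def klDivNats {α : Type*} [Fintype α] (P Q : α → ℝ) : ℝ :=
  ∑ y, P y * Real.log (P y / Q y)

/-- The leaky-query channel `W_u^η` on output alphabet `[2k] ∪ {1*, 0*}`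
(`Sum.inr true = 1*`, `Sum.inr false = 0*`). -/
noncomputable def leaky (k : ℕ) (η : ℝ) (u : Fin (2 * k) → ℝ) :
    Fin (2 * k) → (Fin (2 * k) ⊕ Bool) → ℝ :=
  fun x y => Sum.elim (fun x' => if x' = x then η else 0)
    (fun b => if b then (1 - η) * u x else (1 - η) * (1 - u x)) y

/-- The vector `δ(u)` associated with a leaky-query channel. -/
noncomputable def leakyDelta (k : ℕ) (u : Fin (2 * k) → ℝ) : Fin k → ℝ :=
  fun i => (u (lo i) - u (hi i)) *
    Real.sqrt ((2 * (k : ℝ)) / ((∑ x, u x) * (2 * (k : ℝ) - ∑ x, u x)))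

/-- The partial-erasure channel `W_{x*}` on output alphabet `[2k] ∪ {⊥}`. -/
noncomputable def eraseCh (k : ℕ) (η : ℝ) (xs : Fin (2 * k)) :
    Fin (2 * k) → (Fin (2 * k) ⊕ Unit) → ℝ :=
  fun x y => Sum.elim (fun x' => if x' = x then (if x = xs then 1 else η) else 0)
    (fun _ => if x = xs then 0 else 1 - η) y

/-- The family of all `ρ`-locally differentially private channels from `[2k]` to `𝒴`. -/
def ldpFamily (k : ℕ) {𝒴 : Type*} [Fintype 𝒴] (ρ : ℝ) :
    Set (Fin (2 * k) → 𝒴 → ℝ) :=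
  { W | IsChannel W ∧ ∀ x x' y, W x y ≤ Real.exp ρ * W x' y }

-- AUX PART (to be inserted before the theorem)
section Aux

open Matrix

lemma lo_injective {k : ℕ} : Function.Injective (lo (k := k)) := by
  intro i j h; exact Fin.ext (by have := congrArg Fin.val h; simp [lo] at this; omega)
lemma hi_injective {k : ℕ} : Function.Injective (hi (k := k)) := by
  intro i j h; exact Fin.ext (by have := congrArg Fin.val h; simp [hi] at this; omega)
lemma lo_ne_hi {k : ℕ} (i j : Fin k) : lo i ≠ hi j := by
  intro h; have := congrArg Fin.val h; simp [lo, hi] at this; omega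

def pairEquiv (k : ℕ) : Fin k × Bool ≃ Fin (2 * k) where
  toFun p := if p.2 then hi p.1 else lo p.1
  invFun x := (⟨x.val / 2, by have := x.isLt; omega⟩, decide (x.val % 2 = 1))
  left_inv := by
    rintro ⟨i, b⟩
    cases b
    · simp only [lo, if_neg Bool.false_ne_true]
      refine Prod.ext (Fin.ext ?_) ?_ <;> simp
    · simp only [hi, if_pos rfl]
      refine Prod.ext (Fin.ext ?_) ?_ <;> simp <;> omega
  right_inv := by
    intro x
    by_cases h : x.val % 2 = 1
    · simp only [h, decide_eq_true h, if_pos rfl, hi]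
      exact Fin.ext (by simp; omega)
    · simp only [h, decide_eq_false h, if_neg Bool.false_ne_true, lo]
      exact Fin.ext (by simp; omega)

lemma pairSum {k : ℕ} (f : Fin (2 * k) → ℝ) :
    ∑ x, f x = ∑ i : Fin k, (f (lo i) + f (hi i)) := by
  rw [← Fintype.sum_equiv (pairEquiv k) (fun p => f (pairEquiv k p)) f (fun _ => rfl)]
  rw [Fintype.sum_prod_type]
  refine Finset.sum_congr rfl fun i _ => ?_
  simp [pairEquiv, add_comm]

lemma indSum {k : ℕ} (a b : Fin (2 * k)) :
    ∑ x' : Fin (2 * k), (if x' = a then (1:ℝ) else 0) * (if x' = b then 1 else 0)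
      = if a = b then 1 else 0 := by
  have : ∀ x' : Fin (2 * k), (if x' = a then (1:ℝ) else 0) * (if x' = b then 1 else 0)
      = if x' = a then (if x' = b then (1:ℝ) else 0) else 0 := by
    intro x'; split <;> simp
  rw [Finset.sum_congr rfl fun x' _ => this x', Finset.sum_ite_eq' univ a]
  simp

lemma boolAlg (w a b c d S S' : ℝ) :
    (w*a - w*b)*(w*c - w*d)/(w*S) + (w*(1-a)-w*(1-b))*(w*(1-c)-w*(1-d))/(w*S')
      = w*(S⁻¹+S'⁻¹)*((a-b)*(c-d)) := by
  rcases eq_or_ne w 0 with h | h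
  · simp [h]
  · have e1 : (w*a - w*b)*(w*c - w*d) = w * (w * ((a-b)*(c-d))) := by ring
    have e2 : (w*(1-a)-w*(1-b))*(w*(1-c)-w*(1-d)) = w * (w * ((a-b)*(c-d))) := by ring
    rw [e1, e2, mul_div_mul_left _ _ h, mul_div_mul_left _ _ h,
      div_eq_mul_inv, div_eq_mul_inv]
    ring

lemma Hentry {k : ℕ} (η : ℝ) (hη : 0 < η) (u : Fin (2 * k) → ℝ) (i j : Fin k) :
    HMat k (leaky k η u) i j =
      (if i = j then 2 * η else 0) +
        (1 - η) * ((∑ x, u x)⁻¹ + (2 * (k : ℝ) - ∑ x, u x)⁻¹) *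
          ((u (lo i) - u (hi i)) * (u (lo j) - u (hi j))) := by
  classical
  rw [HMat, Fintype.sum_sum_type]
  have hinl : ∑ x' : Fin (2 * k),
      (leaky k η u (lo i) (Sum.inl x') - leaky k η u (hi i) (Sum.inl x')) *
        (leaky k η u (lo j) (Sum.inl x') - leaky k η u (hi j) (Sum.inl x')) /
        (∑ x, leaky k η u x (Sum.inl x')) = if i = j then 2 * η else 0 := by
    have h1 : ∀ x' : Fin (2 * k),
        (leaky k η u (lo i) (Sum.inl x') - leaky k η u (hi i) (Sum.inl x')) *
          (leaky k η u (lo j) (Sum.inl x') - leaky k η u (hi j) (Sum.inl x')) /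
          (∑ x, leaky k η u x (Sum.inl x')) =
        η * ((if x' = lo i then (1:ℝ) else 0) * (if x' = lo j then 1 else 0))
        - η * ((if x' = lo i then (1:ℝ) else 0) * (if x' = hi j then 1 else 0))
        - η * ((if x' = hi i then (1:ℝ) else 0) * (if x' = lo j then 1 else 0))
        + η * ((if x' = hi i then (1:ℝ) else 0) * (if x' = hi j then 1 else 0)) := by
      intro x'
      have hsum : (∑ x, leaky k η u x (Sum.inl x')) = η := by
        simp [leaky]
      rw [hsum]
      simp only [leaky, Sum.elim_inl]
      have e : ∀ a : Fin (2 * k), (if x' = a then η else 0)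
          = η * (if x' = a then (1:ℝ) else 0) := by
        intro a; split <;> simp
      rw [e, e, e, e, div_eq_iff hη.ne']
      ring
    rw [Finset.sum_congr rfl fun x' _ => h1 x']
    rw [Finset.sum_add_distrib, Finset.sum_sub_distrib, Finset.sum_sub_distrib,
      ← Finset.mul_sum, ← Finset.mul_sum, ← Finset.mul_sum, ← Finset.mul_sum,
      indSum, indSum, indSum, indSum]
    by_cases hij : i = j
    · subst hij
      simp [lo_ne_hi, fun a b => (lo_ne_hi (k := k) a b).symm, two_mul]
    · simp [lo_injective.ne hij, hi_injective.ne hij, hij,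
        lo_ne_hi, fun a b => (lo_ne_hi (k := k) a b).symm]
  rw [hinl]
  congr 1
  rw [Fintype.sum_bool]
  simp only [leaky, Sum.elim_inr, Bool.false_eq_true, if_true, if_false]
  have hT : (∑ x, (1 - η) * u x) = (1 - η) * ∑ x, u x := by
    rw [Finset.mul_sum]
  have hF : (∑ x : Fin (2 * k), (1 - η) * (1 - u x)) = (1 - η) * (2 * (k:ℝ) - ∑ x, u x) := by
    have h2 : ∑ x : Fin (2 * k), (1 - u x) = 2 * (k:ℝ) - ∑ x, u x := by
      rw [Finset.sum_sub_distrib]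
      simp
    rw [← Finset.mul_sum, h2]
  rw [hT, hF]
  exact boolAlg (1 - η) (u (lo i)) (u (hi i)) (u (lo j)) (u (hi j)) _ _

/-- The scalar-plus-rank-one model matrix. -/
noncomputable def rankOne (k : ℕ) (a c : ℝ) (w : Fin k → ℝ) : Matrix (Fin k) (Fin k) ℝ :=
  fun i j => (if i = j then a else 0) + c * (w i * w j)

variable {k : ℕ} {a c : ℝ} {w : Fin k → ℝ}

lemma rankOne_herm : (rankOne k a c w).IsHermitian := by
  rw [Matrix.IsHermitian]
  ext i j
  simp only [Matrix.conjTranspose_apply, rankOne, star_trivial, eq_comm (a := i)]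
  ring_nf

lemma rankOne_mulVec (v : Fin k → ℝ) :
    rankOne k a c w *ᵥ v = fun i => a * v i + c * w i * (∑ j, w j * v j) := by
  funext i
  simp only [Matrix.mulVec, dotProduct, rankOne]
  rw [Finset.sum_congr rfl (fun j _ => add_mul (if i = j then a else 0) (c * (w i * w j)) (v j))]
  rw [Finset.sum_add_distrib]
  congr 1
  · simp [Finset.sum_ite_eq]
  · rw [Finset.mul_sum]
    exact Finset.sum_congr rfl fun j _ => by ring

lemma rankOne_quadform (v : Fin k → ℝ) :
    v ⬝ᵥ (rankOne k a c w *ᵥ v) = a * ∑ j, v j ^ 2 + c * (∑ j, w j * v j) ^ 2 := by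
  rw [rankOne_mulVec]
  simp only [dotProduct]
  rw [Finset.sum_congr rfl (fun j _ => mul_add (v j) _ _), Finset.sum_add_distrib]
  congr 1
  · rw [Finset.mul_sum]; exact Finset.sum_congr rfl fun j _ => by ring
  · have e2 : ∀ x, v x * (c * w x * (∑ j, w j * v j)) = (c * (∑ j, w j * v j)) * (w x * v x) :=
      fun x => by ring
    rw [Finset.sum_congr rfl fun x _ => e2 x, ← Finset.mul_sum]
    ring

lemma unitnorm (hA : (rankOne k a c w).IsHermitian) (i : Fin k) :
    ∑ j, (⇑(hA.eigenvectorBasis i)) j ^ 2 = 1 := by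
  have h := hA.eigenvectorBasis.orthonormal.1 i
  have h2 : ‖hA.eigenvectorBasis i‖ ^ 2 = 1 := by rw [h]; norm_num
  rw [EuclideanSpace.norm_eq] at h2
  rw [Real.sq_sqrt (by positivity)] at h2
  simpa [sq_abs] using h2

lemma rankOne_eig_repr (hA : (rankOne k a c w).IsHermitian) (i : Fin k) :
    ∃ v : Fin k → ℝ, (∑ j, v j ^ 2 = 1) ∧
      hA.eigenvalues i = a + c * (∑ j, w j * v j) ^ 2 := by
  refine ⟨⇑(hA.eigenvectorBasis i), unitnorm hA i, ?_⟩
  have he : hA.eigenvalues i = (⇑(hA.eigenvectorBasis i)) ⬝ᵥ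
      (rankOne k a c w *ᵥ ⇑(hA.eigenvectorBasis i)) := by
    rw [hA.eigenvalues_eq]
    simp [dotProduct]
  rw [he, rankOne_quadform, unitnorm hA i, mul_one]

lemma rankOne_eig_bounds (hA : (rankOne k a c w).IsHermitian) (hc : 0 ≤ c) (i : Fin k) :
    a ≤ hA.eigenvalues i ∧ hA.eigenvalues i ≤ a + c * ∑ j, w j ^ 2 := by
  obtain ⟨v, hv1, hv2⟩ := rankOne_eig_repr hA i
  rw [hv2]
  constructor
  · nlinarith [sq_nonneg (∑ j, w j * v j)]
  · have hcs := Finset.sum_mul_sq_le_sq_mul_sq Finset.univ w v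
    have : (∑ j, w j * v j) ^ 2 ≤ ∑ j, w j ^ 2 := by
      calc (∑ j, w j * v j) ^ 2 ≤ (∑ j, w j ^ 2) * ∑ j, v j ^ 2 := hcs
        _ = ∑ j, w j ^ 2 := by rw [hv1, mul_one]
    nlinarith

lemma rankOne_sum_eig (hA : (rankOne k a c w).IsHermitian) :
    ∑ i, hA.eigenvalues i = a * k + c * ∑ j, w j ^ 2 := by
  have htr : ∑ i, hA.eigenvalues i = (rankOne k a c w).trace := by
    rw [hA.trace_eq_sum_eigenvalues]
    simp
  rw [htr]
  simp only [Matrix.trace, Matrix.diag, rankOne]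
  have e : ∀ i : Fin k, (if True then a else 0) + c * (w i * w i) = a + c * w i ^ 2 :=
    fun i => by rw [if_pos trivial]; ring
  rw [Finset.sum_congr rfl fun i _ => e i, Finset.sum_add_distrib, Finset.sum_const,
    Finset.card_univ, Fintype.card_fin, nsmul_eq_mul, ← Finset.mul_sum]
  ring

lemma rankOne_exists_top (hA : (rankOne k a c w).IsHermitian) (hk : 1 ≤ k)
    (hw : ∀ i, w i = 1) : ∃ i, hA.eigenvalues i = a + c * k := by
  by_contra hno
  push_neg at hno
  have hone : rankOne k a c w *ᵥ (fun _ => (1:ℝ)) = fun i => (a + c * k) * 1 := by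
    rw [rankOne_mulVec]
    funext i
    simp [hw]
  have hsymm : (rankOne k a c w)ᵀ = rankOne k a c w := hA
  have key : ∀ i : Fin k, (⇑(hA.eigenvectorBasis i)) ⬝ᵥ (fun _ => (1:ℝ)) = 0 := by
    intro i
    have t1 : (⇑(hA.eigenvectorBasis i)) ⬝ᵥ (rankOne k a c w *ᵥ (fun _ => (1:ℝ)))
        = (a + c * k) * ((⇑(hA.eigenvectorBasis i)) ⬝ᵥ (fun _ => (1:ℝ))) := by
      rw [hone]
      simp only [dotProduct, mul_one]
      rw [← Finset.sum_mul, mul_comm]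
    have t2 : (⇑(hA.eigenvectorBasis i)) ⬝ᵥ (rankOne k a c w *ᵥ (fun _ => (1:ℝ)))
        = hA.eigenvalues i * ((⇑(hA.eigenvectorBasis i)) ⬝ᵥ (fun _ => (1:ℝ))) := by
      rw [dotProduct_mulVec, ← Matrix.mulVec_transpose, hsymm,
        hA.mulVec_eigenvectorBasis]
      simp only [dotProduct, Pi.smul_apply, smul_eq_mul, mul_one]
      rw [← Finset.mul_sum]
    have := t1.symm.trans t2
    have hne : hA.eigenvalues i - (a + c * k) ≠ 0 := sub_ne_zero.mpr (hno i)
    have : (hA.eigenvalues i - (a + c * k)) *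
        ((⇑(hA.eigenvectorBasis i)) ⬝ᵥ (fun _ => (1:ℝ))) = 0 := by
      rw [sub_mul, this]
      ring
    exact (mul_eq_zero.mp this).resolve_left hne
  have hzero : (WithLp.toLp 2 (fun _ => (1:ℝ)) : EuclideanSpace ℝ (Fin k)) = 0 := by
    apply hA.eigenvectorBasis.repr.injective
    ext i
    rw [hA.eigenvectorBasis.repr_apply_apply]
    simp only [map_zero]
    have := key i
    simp only [dotProduct, mul_one] at this
    simp [PiLp.inner_apply, RCLike.inner_apply, conj_trivial]
    convert this using 1
  have := congrArg (fun v : EuclideanSpace ℝ (Fin k) => v ⟨0, hk⟩) hzero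
  simp at this

lemma rankOne_frobsq :
    ∑ i, ∑ j, (rankOne k a c w i j) ^ 2
      = a^2 * k + 2*a*(c * ∑ j, w j ^ 2) + (c * ∑ j, w j ^ 2)^2 := by
  classical
  have e : ∀ i j : Fin k, (rankOne k a c w i j)^2
      = (if i = j then a^2 + 2*a*c*(w i*w j) else 0) + c^2*(w i^2*w j^2) := by
    intro i j
    by_cases h : i = j <;> simp [rankOne, h] <;> ring
  have inner : ∀ i : Fin k, ∑ j, (rankOne k a c w i j)^2
      = a^2 + 2*a*c*w i^2 + c^2 * w i^2 * ∑ j, w j ^ 2 := by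
    intro i
    rw [Finset.sum_congr rfl fun j _ => e i j, Finset.sum_add_distrib]
    rw [Finset.sum_ite_eq univ i (fun j => a^2 + 2*a*c*(w i*w j))]
    have : ∀ j : Fin k, c^2*(w i^2*w j^2) = (c^2 * w i^2) * w j ^2 := fun j => by ring
    rw [Finset.sum_congr rfl fun j _ => this j, ← Finset.mul_sum,
      if_pos (Finset.mem_univ i)]
    ring
  rw [Finset.sum_congr rfl fun i _ => inner i, Finset.sum_add_distrib, Finset.sum_add_distrib]
  rw [Finset.sum_const, Finset.card_univ, Fintype.card_fin, nsmul_eq_mul]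
  have h1 : ∀ i : Fin k, 2*a*c*w i^2 = (2*a*c) * w i ^2 := fun i => by ring
  have h2 : ∀ i : Fin k, c^2 * w i^2 * ∑ j, w j ^ 2 = (c^2 * ∑ j, w j ^ 2) * w i ^ 2 :=
    fun i => by ring
  rw [Finset.sum_congr rfl fun i _ => h1 i, ← Finset.mul_sum,
    Finset.sum_congr rfl fun i _ => h2 i, ← Finset.mul_sum]
  ring

lemma eta_facts (hk : 1 ≤ k) :
    0 < (Real.sqrt k)⁻¹ ∧ (Real.sqrt k)⁻¹ ≤ 1 ∧ ((Real.sqrt k)⁻¹)^2 * k = 1 ∧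
      (Real.sqrt k)⁻¹ * k = Real.sqrt k := by
  have hk0 : (0:ℝ) < k := by exact_mod_cast hk
  have hs : 1 ≤ Real.sqrt k := Real.one_le_sqrt.mpr (by exact_mod_cast hk)
  have hs0 : 0 < Real.sqrt k := lt_of_lt_of_le one_pos hs
  refine ⟨inv_pos.mpr hs0, inv_le_one_of_one_le₀ hs, ?_, ?_⟩
  · have h : ((Real.sqrt k)⁻¹)^2 = ((k:ℝ))⁻¹ := by rw [inv_pow, Real.sq_sqrt hk0.le]
    rw [h, inv_mul_cancel₀ hk0.ne']
  · rw [← Real.sq_sqrt hk0.le, sq]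
    field_simp
    rw [Real.sqrt_sq hs0.le]

lemma nuc_rankOne (ha : 0 < a) (hc : 0 ≤ c) :
    nucNorm (rankOne k a c w) = a * k + c * ∑ j, w j ^ 2 := by
  rw [nucNorm, dif_pos rankOne_herm]
  have habs : ∀ i : Fin k, |rankOne_herm.eigenvalues (A := rankOne k a c w) i|
      = rankOne_herm.eigenvalues (A := rankOne k a c w) i := fun i =>
    abs_of_nonneg (le_trans ha.le (rankOne_eig_bounds rankOne_herm hc i).1)
  rw [Finset.sum_congr rfl fun i _ => habs i, rankOne_sum_eig]

lemma op_rankOne_le (hk : 1 ≤ k) (ha : 0 < a) (hc : 0 ≤ c)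
    (hb : a + c * ∑ j, w j ^ 2 ≤ 2) : opNorm (rankOne k a c w) ≤ 2 := by
  rw [opNorm, dif_pos rankOne_herm]
  haveI : Nonempty (Fin k) := ⟨⟨0, hk⟩⟩
  refine ciSup_le fun i => ?_
  have hbd := rankOne_eig_bounds (rankOne_herm (k := k) (a := a) (c := c) (w := w)) hc i
  exact abs_le.mpr ⟨by linarith [hbd.1], le_trans hbd.2 hb⟩

lemma op_rankOne_eq (hk : 1 ≤ k) (ha : 0 < a) (hc : 0 ≤ c)
    (hw : ∀ i, w i = 1) (heq : a + c * k = 2) : opNorm (rankOne k a c w) = 2 := by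
  have hsum : ∑ j, w j ^ 2 = (k : ℝ) := by simp [hw]
  refine le_antisymm (op_rankOne_le hk ha hc (by rw [hsum]; linarith)) ?_
  rw [opNorm, dif_pos rankOne_herm]
  obtain ⟨i0, hi0⟩ := rankOne_exists_top (rankOne_herm (k := k) (a := a) (c := c) (w := w)) hk hw
  haveI : Nonempty (Fin k) := ⟨⟨0, hk⟩⟩
  have : (2:ℝ) = |rankOne_herm.eigenvalues (A := rankOne k a c w) i0| := by
    rw [hi0, heq]
    norm_num
  rw [this]
  exact le_ciSup (f := fun i =>
    |(rankOne_herm (k := k) (a := a) (c := c) (w := w)).eigenvalues i|)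
    (Set.Finite.bddAbove (Set.finite_range _)) i0

lemma frob_rankOne :
    frobNorm (rankOne k a c w)
      = Real.sqrt (a^2 * k + 2*a*(c * ∑ j, w j ^ 2) + (c * ∑ j, w j ^ 2)^2) := by
  rw [frobNorm, rankOne_frobsq]

end Aux

section Member

variable {k : ℕ}

/-- The rank-one coefficient of a leaky-query channel. -/
noncomputable def ccc (k : ℕ) (u : Fin (2 * k) → ℝ) : ℝ :=
  (1 - (Real.sqrt k)⁻¹) * ((∑ x, u x)⁻¹ + (2 * (k:ℝ) - ∑ x, u x)⁻¹)

/-- The difference vector of a leaky-query channel. -/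
def ww (k : ℕ) (u : Fin (2 * k) → ℝ) : Fin k → ℝ := fun i => u (lo i) - u (hi i)

lemma Hmat_eq (hk : 1 ≤ k) (u : Fin (2 * k) → ℝ) :
    HMat k (leaky k (Real.sqrt k)⁻¹ u)
      = rankOne k (2 * (Real.sqrt k)⁻¹) (ccc k u) (ww k u) := by
  obtain ⟨hη0, -, -, -⟩ := eta_facts (k := k) hk
  funext i j
  rw [Hentry _ hη0 u i j]
  rfl

lemma c_bounds (hk : 1 ≤ k) (u : Fin (2 * k) → ℝ) (hu : ∀ x, u x ∈ Set.Icc (0:ℝ) 1) :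
    0 ≤ ccc k u ∧ 0 ≤ ∑ j, ww k u j ^ 2 ∧
      ccc k u * ∑ j, ww k u j ^ 2 ≤ 2 * (1 - (Real.sqrt k)⁻¹) := by
  obtain ⟨hη0, hη1, -, -⟩ := eta_facts (k := k) hk
  have hS0 : 0 ≤ ∑ x, u x := Finset.sum_nonneg fun x _ => (hu x).1
  have hS2k : ∑ x, u x ≤ 2 * (k:ℝ) := by
    calc ∑ x, u x ≤ ∑ _x : Fin (2 * k), (1:ℝ) := Finset.sum_le_sum fun x _ => (hu x).2
    _ = 2 * (k:ℝ) := by simp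
  have hTnn : 0 ≤ ∑ j, ww k u j ^ 2 := Finset.sum_nonneg fun j _ => sq_nonneg _
  have hT1 : (∑ j, ww k u j ^ 2) ≤ ∑ x, u x := by
    rw [pairSum u]
    apply Finset.sum_le_sum
    intro i _
    have h1 := hu (lo i); have h2 := hu (hi i)
    simp only [Set.mem_Icc] at h1 h2
    simp only [ww]
    nlinarith [h1.1, h1.2, h2.1, h2.2]
  have hT2 : (∑ j, ww k u j ^ 2) ≤ 2 * (k:ℝ) - ∑ x, u x := by
    have he : 2 * (k:ℝ) - ∑ x, u x = ∑ i : Fin k, ((1 - u (lo i)) + (1 - u (hi i))) := by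
      rw [← pairSum (fun x => 1 - u x), Finset.sum_sub_distrib]
      simp
    rw [he]
    apply Finset.sum_le_sum
    intro i _
    have h1 := hu (lo i); have h2 := hu (hi i)
    simp only [Set.mem_Icc] at h1 h2
    simp only [ww]
    nlinarith [h1.1, h1.2, h2.1, h2.2]
  have hc : 0 ≤ ccc k u := by
    apply mul_nonneg (by linarith)
    exact add_nonneg (inv_nonneg.mpr hS0) (inv_nonneg.mpr (by linarith))
  refine ⟨hc, hTnn, ?_⟩
  have hkey : ((∑ x, u x)⁻¹ + (2 * (k:ℝ) - ∑ x, u x)⁻¹) * ∑ j, ww k u j ^ 2 ≤ 2 := by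
    rcases eq_or_lt_of_le hS0 with hS | hS
    · have hT0 : ∑ j, ww k u j ^ 2 = 0 := le_antisymm (by rw [← hS] at hT1; exact hT1) hTnn
      rw [hT0, mul_zero]
      norm_num
    · rcases eq_or_lt_of_le hS2k with hS' | hS'
      · have hT0 : ∑ j, ww k u j ^ 2 = 0 :=
          le_antisymm (by rw [hS'] at hT2; simpa using hT2) hTnn
        rw [hT0, mul_zero]
        norm_num
      · have hb : 0 < 2 * (k:ℝ) - ∑ x, u x := by linarith
        rw [inv_add_inv hS.ne' hb.ne', div_mul_eq_mul_div, div_le_iff₀ (by positivity)]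
        nlinarith [mul_nonneg (sub_nonneg.mpr hT1) (sub_nonneg.mpr hT2),
          mul_le_mul hT1 hT2 hTnn hS0]
  calc ccc k u * ∑ j, ww k u j ^ 2
      = (1 - (Real.sqrt k)⁻¹) *
        (((∑ x, u x)⁻¹ + (2 * (k:ℝ) - ∑ x, u x)⁻¹) * ∑ j, ww k u j ^ 2) := by
        rw [ccc, mul_assoc]
    _ ≤ (1 - (Real.sqrt k)⁻¹) * 2 := by
        exact mul_le_mul_of_nonneg_left hkey (by linarith)
    _ = 2 * (1 - (Real.sqrt k)⁻¹) := by ring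

lemma member_facts (hk : 1 ≤ k) (u : Fin (2 * k) → ℝ) (hu : ∀ x, u x ∈ Set.Icc (0:ℝ) 1) :
    ∃ t : ℝ, 0 ≤ t ∧ t ≤ 2 * (1 - (Real.sqrt k)⁻¹) ∧
      nucNorm (HMat k (leaky k (Real.sqrt k)⁻¹ u)) = 2 * Real.sqrt k + t ∧
      opNorm (HMat k (leaky k (Real.sqrt k)⁻¹ u)) ≤ 2 ∧
      frobNorm (HMat k (leaky k (Real.sqrt k)⁻¹ u))
        = Real.sqrt (4 + 4 * (Real.sqrt k)⁻¹ * t + t ^ 2) := by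
  obtain ⟨hη0, hη1, hη2, hηk⟩ := eta_facts (k := k) hk
  obtain ⟨hc, hTnn, hcT⟩ := c_bounds hk u hu
  refine ⟨ccc k u * ∑ j, ww k u j ^ 2, mul_nonneg hc hTnn, hcT, ?_, ?_, ?_⟩
  · rw [Hmat_eq hk u, nuc_rankOne (by positivity) hc, mul_assoc, hηk]
  · rw [Hmat_eq hk u]
    exact op_rankOne_le hk (by positivity) hc (by linarith)
  · rw [Hmat_eq hk u, frob_rankOne]
    congr 1
    linear_combination 4 * hη2

lemma member_star (hk : 1 ≤ k) :
    (∀ x : Fin (2 * k), (if x.val % 2 = 0 then (1:ℝ) else 0) ∈ Set.Icc (0:ℝ) 1) ∧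
      opNorm (HMat k (leaky k (Real.sqrt k)⁻¹
        (fun x => if x.val % 2 = 0 then (1:ℝ) else 0))) = 2 := by
  obtain ⟨hη0, hη1, hη2, hηk⟩ := eta_facts (k := k) hk
  have hk0 : (0:ℝ) < k := by exact_mod_cast hk
  set u : Fin (2 * k) → ℝ := fun x => if x.val % 2 = 0 then (1:ℝ) else 0 with hudef
  have hbox : ∀ x, u x ∈ Set.Icc (0:ℝ) 1 := by
    intro x
    by_cases h : x.val % 2 = 0 <;> simp [hudef, h]
  have hwlo : ∀ i : Fin k, u (lo i) = 1 := by
    intro i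
    have h1 : (2 * i.val) % 2 = 0 := by omega
    simp [hudef, lo, h1]
  have hwhi : ∀ i : Fin k, u (hi i) = 0 := by
    intro i
    have h1 : ¬ ((2 * i.val + 1) % 2 = 0) := by omega
    simp [hudef, hi, h1]
  have hw : ∀ i : Fin k, ww k u i = 1 := by
    intro i
    simp only [ww]
    rw [hwlo i, hwhi i]
    norm_num
  have hS : ∑ x, u x = (k:ℝ) := by
    rw [pairSum u]
    have : ∀ i : Fin k, u (lo i) + u (hi i) = 1 := fun i => by rw [hwlo i, hwhi i]; norm_num
    rw [Finset.sum_congr rfl fun i _ => this i]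
    simp
  obtain ⟨hc, -, -⟩ := c_bounds hk u hbox
  refine ⟨hbox, ?_⟩
  rw [Hmat_eq hk u]
  apply op_rankOne_eq hk (by positivity) hc hw
  have hccc : ccc k u = (1 - (Real.sqrt k)⁻¹) * ((k:ℝ)⁻¹ + (k:ℝ)⁻¹) := by
    rw [ccc, hS, show 2 * (k:ℝ) - k = (k:ℝ) by ring]
  rw [hccc]
  have hinv : ((k:ℝ)⁻¹ + (k:ℝ)⁻¹) * (k:ℝ) = 2 := by
    field_simp
    norm_num
  calc 2 * (Real.sqrt k)⁻¹ + (1 - (Real.sqrt k)⁻¹) * ((k:ℝ)⁻¹ + (k:ℝ)⁻¹) * (k:ℝ)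
      = 2 * (Real.sqrt k)⁻¹ + (1 - (Real.sqrt k)⁻¹) * (((k:ℝ)⁻¹ + (k:ℝ)⁻¹) * (k:ℝ)) := by ring
    _ = 2 := by rw [hinv]; ring

end Member

/-- Norms of the family of leaky-query channels with leakage
`η = 1/√k`: `2 ≤ ‖𝒲‖_F ≤ 2√2`, `2√k ≤ ‖𝒲‖_* ≤ 2√k + 2`, and `‖𝒲‖_op = 2`. -/
theorem leaky_query_family_norms
    (k : ℕ) (hk : 1 ≤ k)
    (𝒲 : Set (Fin (2 * k) → (Fin (2 * k) ⊕ Bool) → ℝ))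
    (h𝒲 : 𝒲 = { W | ∃ u : Fin (2 * k) → ℝ,
      (∀ x, u x ∈ Set.Icc (0 : ℝ) 1) ∧ W = leaky k (Real.sqrt k)⁻¹ u }) :
    (2 ≤ famFrob k 𝒲 ∧ famFrob k 𝒲 ≤ 2 * Real.sqrt 2) ∧
      (2 * Real.sqrt k ≤ famNuc k 𝒲 ∧ famNuc k 𝒲 ≤ 2 * Real.sqrt k + 2) ∧
      famOp k 𝒲 = 2 := by
  subst h𝒲
  obtain ⟨hη0, hη1, hη2, hηk⟩ := eta_facts (k := k) hk
  have hW0mem : leaky k (Real.sqrt k)⁻¹ (fun _ => 0) ∈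
      { W | ∃ u : Fin (2 * k) → ℝ,
        (∀ x, u x ∈ Set.Icc (0 : ℝ) 1) ∧ W = leaky k (Real.sqrt k)⁻¹ u } :=
    ⟨fun _ => 0, fun _ => Set.mem_Icc.mpr ⟨le_refl 0, zero_le_one⟩, rfl⟩
  have sqrt4 : Real.sqrt 4 = 2 := by
    rw [show (4:ℝ) = 2^2 by norm_num, Real.sqrt_sq (by norm_num)]
  have sqrt8 : Real.sqrt 8 = 2 * Real.sqrt 2 := by
    rw [show (8:ℝ) = 2^2*2 by norm_num, Real.sqrt_mul (by positivity),
      Real.sqrt_sq (by norm_num)]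
  -- Frobenius bounds on every member
  have memF : ∀ r ∈ (fun W => frobNorm (HMat k W)) ''
      { W | ∃ u : Fin (2 * k) → ℝ,
        (∀ x, u x ∈ Set.Icc (0 : ℝ) 1) ∧ W = leaky k (Real.sqrt k)⁻¹ u },
      2 ≤ r ∧ r ≤ 2 * Real.sqrt 2 := by
    rintro r ⟨W, ⟨u, hu, rfl⟩, rfl⟩
    obtain ⟨t, ht0, ht2, -, -, hfrob⟩ := member_facts hk u hu
    dsimp only
    rw [hfrob]
    constructor
    · rw [← sqrt4]
      apply Real.sqrt_le_sqrt
      nlinarith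
    · rw [← sqrt8]
      apply Real.sqrt_le_sqrt
      nlinarith [mul_nonneg ht0 (by linarith : (0:ℝ) ≤ t + 4 * (Real.sqrt k)⁻¹),
        sq_nonneg (Real.sqrt k)⁻¹,
        mul_nonneg (by linarith : (0:ℝ) ≤ 2 - 2 * (Real.sqrt k)⁻¹ - t)
          (by linarith : (0:ℝ) ≤ t + 2 + 2 * (Real.sqrt k)⁻¹)]
  -- Nuclear bounds on every member
  have memN : ∀ r ∈ (fun W => nucNorm (HMat k W)) ''
      { W | ∃ u : Fin (2 * k) → ℝ,
        (∀ x, u x ∈ Set.Icc (0 : ℝ) 1) ∧ W = leaky k (Real.sqrt k)⁻¹ u },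
      2 * Real.sqrt k ≤ r ∧ r ≤ 2 * Real.sqrt k + 2 := by
    rintro r ⟨W, ⟨u, hu, rfl⟩, rfl⟩
    obtain ⟨t, ht0, ht2, hnuc, -, -⟩ := member_facts hk u hu
    dsimp only
    rw [hnuc]
    constructor
    · linarith
    · linarith
  -- Operator bound on every member
  have memO : ∀ r ∈ (fun W => opNorm (HMat k W)) ''
      { W | ∃ u : Fin (2 * k) → ℝ,
        (∀ x, u x ∈ Set.Icc (0 : ℝ) 1) ∧ W = leaky k (Real.sqrt k)⁻¹ u },
      r ≤ 2 := by
    rintro r ⟨W, ⟨u, hu, rfl⟩, rfl⟩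
    obtain ⟨t, -, -, -, hop, -⟩ := member_facts hk u hu
    exact hop
  obtain ⟨hstarbox, hstarop⟩ := member_star (k := k) hk
  have h2mem : (2:ℝ) ∈ (fun W => opNorm (HMat k W)) ''
      { W | ∃ u : Fin (2 * k) → ℝ,
        (∀ x, u x ∈ Set.Icc (0 : ℝ) 1) ∧ W = leaky k (Real.sqrt k)⁻¹ u } :=
    ⟨leaky k (Real.sqrt k)⁻¹ (fun x => if x.val % 2 = 0 then (1:ℝ) else 0),
      ⟨fun x => if x.val % 2 = 0 then (1:ℝ) else 0, hstarbox, rfl⟩, hstarop⟩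
  refine ⟨⟨?_, ?_⟩, ⟨?_, ?_⟩, ?_⟩
  · -- 2 ≤ famFrob
    unfold famFrob
    have hmem := Set.mem_image_of_mem (fun W => frobNorm (HMat k W)) hW0mem
    have hbdd : BddAbove ((fun W => frobNorm (HMat k W)) '' _) :=
      ⟨2 * Real.sqrt 2, fun r hr => (memF r hr).2⟩
    exact le_trans (memF _ hmem).1 (le_csSup hbdd hmem)
  · unfold famFrob
    exact csSup_le ⟨_, Set.mem_image_of_mem (fun W => frobNorm (HMat k W)) hW0mem⟩
      (fun r hr => (memF r hr).2)
  · unfold famNuc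
    have hmem := Set.mem_image_of_mem (fun W => nucNorm (HMat k W)) hW0mem
    have hbdd : BddAbove ((fun W => nucNorm (HMat k W)) '' _) :=
      ⟨2 * Real.sqrt k + 2, fun r hr => (memN r hr).2⟩
    exact le_trans (memN _ hmem).1 (le_csSup hbdd hmem)
  · unfold famNuc
    exact csSup_le ⟨_, Set.mem_image_of_mem (fun W => nucNorm (HMat k W)) hW0mem⟩
      (fun r hr => (memN r hr).2)
  · unfold famOp
    refine le_antisymm (csSup_le ⟨2, h2mem⟩ memO) (le_csSup ⟨2, memO⟩ h2mem)


end Paper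
end

section
/- Let k ≥ 2, η ∈ (0,1), and x* ∈ [2k]. Then the channel information matrix of the partial-erasure channel W_{x*} is diagonal, with i-th diagonal entry equal to 1 + η + (1−η)/(2k−1) if x* ∈ {2i−1, 2i}, and equal to 2η otherwise. Consequently, for η = 1/√k, the family 𝒲_⊥^{1/√k} = {W_{x*} : x* ∈ [2k]} satisfies 2 ≤ ‖𝒲_⊥^{1/√k}‖_F ≤ 2√2, 2√k ≤ ‖𝒲_⊥^{1/√k}‖_* ≤ 2√k + 2, and 1 ≤ ‖𝒲_⊥^{1/√k}‖_op ≤ 2. -/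
open Finset

namespace Paper

/- ===== auxiliary lemmas ===== -/

lemma hmat_erase (k : ℕ) (hk : 2 ≤ k) (η : ℝ) (hη0 : 0 < η) (hη1 : η < 1)
    (xs : Fin (2 * k)) :
    HMat k (eraseCh k η xs) = Matrix.diagonal (fun i : Fin k =>
      if xs.val / 2 = i.val then 1 + η + (1 - η) / (2 * (k : ℝ) - 1) else 2 * η) := by
  have hkR : (1:ℝ) ≤ (k:ℝ) := by exact_mod_cast Nat.one_le_of_lt hk
  have h2k1 : (0:ℝ) < 2 * (k:ℝ) - 1 := by linarith
  have h1η : (0:ℝ) < 1 - η := by linarith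
  have hden : ∀ x' : Fin (2*k), (∑ x, eraseCh k η xs x (Sum.inl x')) =
      (if x' = xs then (1:ℝ) else η) := by
    intro x'
    simp only [eraseCh, Sum.elim_inl]
    rw [Finset.sum_ite_eq univ x' (fun x => if x = xs then (1:ℝ) else η)]
    simp
  have hdenU : (∑ x, eraseCh k η xs x (Sum.inr ())) = (2 * (k:ℝ) - 1) * (1 - η) := by
    simp only [eraseCh, Sum.elim_inr]
    have : ∀ x : Fin (2*k), (if x = xs then (0:ℝ) else 1 - η)
        = (1 - η) - (if x = xs then (1-η) else 0) := by intro x; split <;> ring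
    rw [Finset.sum_congr rfl fun x _ => this x, Finset.sum_sub_distrib, Finset.sum_const,
      Finset.sum_ite_eq' univ xs (fun _ => (1-η))]
    simp only [Finset.card_univ, Fintype.card_fin, Finset.mem_univ, if_pos, nsmul_eq_mul]
    push_cast; ring
  ext i j
  have hlohi : ∀ (a b : Fin k), lo a ≠ hi b := by
    intro a b h
    have := congrArg Fin.val h
    simp only [lo, hi] at this; omega
  have hW : ∀ (x : Fin (2*k)) (x' : Fin (2*k)), eraseCh k η xs x (Sum.inl x') =
      if x' = x then (if x = xs then (1:ℝ) else η) else 0 := fun _ _ => rfl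
  have hWu : ∀ (x : Fin (2*k)), eraseCh k η xs x (Sum.inr ()) =
      if x = xs then (0:ℝ) else 1 - η := fun _ => rfl
  simp only [HMat]
  rw [Fintype.sum_sum_type]
  simp only [Finset.univ_unique, Finset.sum_singleton]
  by_cases hij : i = j
  · subst hij
    rw [Matrix.diagonal_apply_eq]
    have hne : lo i ≠ hi i := hlohi i i
    have key : (∑ x' : Fin (2*k),
        (eraseCh k η xs (lo i) (Sum.inl x') - eraseCh k η xs (hi i) (Sum.inl x')) *
        (eraseCh k η xs (lo i) (Sum.inl x') - eraseCh k η xs (hi i) (Sum.inl x')) /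
        (∑ x, eraseCh k η xs x (Sum.inl x')))
        = (if lo i = xs then (1:ℝ) else η) + (if hi i = xs then (1:ℝ) else η) := by
      rw [← Finset.sum_subset (Finset.subset_univ ({lo i, hi i} : Finset (Fin (2*k))))]
      · rw [Finset.sum_pair hne, hden, hden]
        simp only [hW, if_true, hne, Ne.symm hne, if_false, sub_zero, zero_sub, neg_mul_neg,
          if_pos]
        have h1 : (if lo i = xs then (1:ℝ) else η) ≠ 0 := by split <;> [norm_num; exact ne_of_gt hη0]
        have h2 : (if hi i = xs then (1:ℝ) else η) ≠ 0 := by split <;> [norm_num; exact ne_of_gt hη0]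
        rw [mul_div_assoc, div_self h1, mul_one, mul_div_assoc, div_self h2, mul_one]
      · intro x' _ hx'
        simp only [Finset.mem_insert, Finset.mem_singleton, not_or] at hx'
        simp only [hW, if_neg hx'.1, if_neg hx'.2]
        norm_num
    rw [key, hdenU]
    simp only [hWu]
    have hne2 : (2 * (k:ℝ) - 1) ≠ 0 := ne_of_gt h2k1
    have hne3 : (1 - η) ≠ 0 := ne_of_gt h1η
    by_cases hc : xs.val / 2 = i.val
    · rw [if_pos hc]
      by_cases hpar : xs.val % 2 = 0
      · have hxl : lo i = xs := by apply Fin.ext; simp only [lo]; omega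
        have hxh : hi i ≠ xs := fun h => hne (hxl.trans h.symm)
        rw [if_pos hxl, if_neg hxh, if_pos hxl, if_neg hxh]
        field_simp
        ring
      · have hxh : hi i = xs := by apply Fin.ext; simp only [hi]; omega
        have hxl : lo i ≠ xs := fun h => hne (h.trans hxh.symm)
        rw [if_neg hxl, if_pos hxh, if_neg hxl, if_pos hxh]
        field_simp
        ring
    · rw [if_neg hc]
      have hxl : lo i ≠ xs := by
        intro h; apply hc; have := congrArg Fin.val h; simp only [lo] at this; omega
      have hxh : hi i ≠ xs := by
        intro h; apply hc; have := congrArg Fin.val h; simp only [hi] at this; omega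
      rw [if_neg hxl, if_neg hxh, if_neg hxl, if_neg hxh]
      simp only [sub_self, zero_mul, zero_div, add_zero]
      ring
  · rw [Matrix.diagonal_apply_ne _ hij]
    have hvij : i.val ≠ j.val := fun hv => hij (Fin.ext hv)
    have h1 : lo i ≠ lo j := by
      intro h; have := congrArg Fin.val h; simp only [lo] at this; omega
    have h2 : lo i ≠ hi j := hlohi i j
    have h3 : hi i ≠ lo j := fun h => hlohi j i h.symm
    have h4 : hi i ≠ hi j := by
      intro h; have := congrArg Fin.val h; simp only [hi] at this; omega
    have zinl : ∀ x' : Fin (2*k),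
        (eraseCh k η xs (lo i) (Sum.inl x') - eraseCh k η xs (hi i) (Sum.inl x')) *
        (eraseCh k η xs (lo j) (Sum.inl x') - eraseCh k η xs (hi j) (Sum.inl x')) /
        (∑ x, eraseCh k η xs x (Sum.inl x')) = 0 := by
      intro x'
      simp only [hW]
      by_cases e1 : x' = lo i
      · subst e1
        rw [if_neg (fun h : lo i = lo j => h1 h), if_neg (fun h : lo i = hi j => h2 h)]
        simp
      · by_cases e2 : x' = hi i
        · subst e2
          rw [if_neg (fun h : hi i = lo j => h3 h), if_neg (fun h : hi i = hi j => h4 h)]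
          simp
        · rw [if_neg e1, if_neg e2]
          simp
    rw [Finset.sum_congr rfl fun x' _ => zinl x', Finset.sum_const_zero, zero_add]
    simp only [hWu]
    by_cases f1 : lo j = xs
    · have g1 : lo i ≠ xs := fun h => h1 (h.trans f1.symm)
      have g2 : hi i ≠ xs := fun h => h3 (h.trans f1.symm)
      rw [if_neg g1, if_neg g2, sub_self, zero_mul, zero_div]
    · by_cases f2 : hi j = xs
      · have g1 : lo i ≠ xs := fun h => h2 (h.trans f2.symm)
        have g2 : hi i ≠ xs := fun h => h4 (h.trans f2.symm)
        rw [if_neg g1, if_neg g2, sub_self, zero_mul, zero_div]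
      · rw [if_neg f1, if_neg f2, sub_self, mul_zero, zero_div]

lemma trace_eq_sum_eig {n : Type*} [Fintype n] [DecidableEq n] {A : Matrix n n ℝ}
    (hA : A.IsHermitian) : A.trace = ∑ i, hA.eigenvalues i := by
  simpa using hA.trace_eq_sum_eigenvalues

lemma diag_eig_mem {n : Type*} [Fintype n] [DecidableEq n] (d : n → ℝ) (i : n) :
    ∃ j, d j = (Matrix.isHermitian_diagonal d).eigenvalues i := by
  have := (Matrix.isHermitian_diagonal d).eigenvalues_mem_spectrum_real i
  rw [spectrum_diagonal] at this
  exact this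

lemma sum_two_valued {k : ℕ} (i0 : Fin k) (A B : ℝ) :
    ∑ i : Fin k, (if i = i0 then A else B) = A + ((k:ℝ) - 1) * B := by
  have h : ∀ i : Fin k, (if i = i0 then A else B) = B + (if i = i0 then A - B else 0) := by
    intro i; split <;> ring
  rw [Finset.sum_congr rfl fun i _ => h i, Finset.sum_add_distrib, Finset.sum_const,
    Finset.sum_ite_eq' univ i0 (fun _ => A - B)]
  simp only [Finset.card_univ, Fintype.card_fin, Finset.mem_univ, if_pos, nsmul_eq_mul]
  ring

lemma nucNorm_two_valued {k : ℕ} (i0 : Fin k) (a b : ℝ) (ha : 0 < a) (hb : 0 < b) :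
    nucNorm (Matrix.diagonal (fun i => if i = i0 then a else b)) = a + ((k:ℝ) - 1) * b := by
  set d : Fin k → ℝ := fun i => if i = i0 then a else b with hd
  have hherm := Matrix.isHermitian_diagonal d
  rw [nucNorm, dif_pos hherm]
  have hpos : ∀ i, 0 < hherm.eigenvalues i := by
    intro i
    obtain ⟨j, hj⟩ := diag_eig_mem d i
    rw [← hj]; simp only [hd]; split <;> assumption
  rw [Finset.sum_congr rfl fun i _ => abs_of_pos (hpos i)]
  rw [← trace_eq_sum_eig hherm, Matrix.trace_diagonal, hd, sum_two_valued]

lemma opNorm_two_valued_bounds {k : ℕ} (i0 : Fin k) (a b : ℝ)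
    (hb : 0 < b) (hba : b < a) :
    a ≤ opNorm (Matrix.diagonal (fun i => if i = i0 then a else b)) ∧
    opNorm (Matrix.diagonal (fun i => if i = i0 then a else b)) ≤ max a b := by
  have : Nonempty (Fin k) := ⟨i0⟩
  set d : Fin k → ℝ := fun i => if i = i0 then a else b with hd
  have hherm := Matrix.isHermitian_diagonal d
  rw [opNorm, dif_pos hherm]
  have hmem : ∀ i, hherm.eigenvalues i = a ∨ hherm.eigenvalues i = b := by
    intro i
    obtain ⟨j, hj⟩ := diag_eig_mem d i
    rw [← hj]; simp only [hd]; split <;> [left; right] <;> rfl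
  have hbdd : BddAbove (Set.range fun i => |hherm.eigenvalues i|) :=
    Set.Finite.bddAbove (Set.finite_range _)
  constructor
  · have hex : ∃ i, hherm.eigenvalues i = a := by
      by_contra hc
      push_neg at hc
      have hall : ∀ i, hherm.eigenvalues i = b := fun i => (hmem i).resolve_left (hc i)
      have ht := trace_eq_sum_eig hherm
      rw [Matrix.trace_diagonal,
        Finset.sum_congr rfl fun i _ => hall i, Finset.sum_const] at ht
      simp only [hd, sum_two_valued, Finset.card_univ, Fintype.card_fin, nsmul_eq_mul] at ht
      have : a = b := by linarith
      exact absurd this (ne_of_gt hba)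
    obtain ⟨i, hi⟩ := hex
    calc a = |hherm.eigenvalues i| := by rw [hi, abs_of_pos (hb.trans hba)]
    _ ≤ ⨆ i, |hherm.eigenvalues i| := le_ciSup hbdd i
  · apply ciSup_le
    intro i
    rcases hmem i with h | h <;> rw [h]
    · rw [abs_of_pos (hb.trans hba)]; exact le_max_left _ _
    · rw [abs_of_pos hb]; exact le_max_right _ _

lemma frobNorm_two_valued {k : ℕ} (i0 : Fin k) (a b : ℝ) :
    frobNorm (Matrix.diagonal (fun i => if i = i0 then a else b)) =
      Real.sqrt (a ^ 2 + ((k:ℝ) - 1) * b ^ 2) := by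
  rw [frobNorm]
  congr 1
  have h1 : ∀ i : Fin k, ∑ j, ((Matrix.diagonal (fun i => if i = i0 then a else b)) i j) ^ 2
      = (if i = i0 then a else b) ^ 2 := by
    intro i
    rw [Finset.sum_eq_single i]
    · rw [Matrix.diagonal_apply_eq]
    · intro j _ hj
      rw [Matrix.diagonal_apply_ne' _ hj]
      exact zero_pow (by norm_num)
    · exact fun h => absurd (Finset.mem_univ i) h
  rw [Finset.sum_congr rfl fun i _ => h1 i]
  have h2 : ∀ i : Fin k, (if i = i0 then a else b) ^ 2 = if i = i0 then a^2 else b^2 := by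
    intro i; split <;> rfl
  rw [Finset.sum_congr rfl fun i _ => h2 i, sum_two_valued]

lemma sSup_range_bounds {ι : Type*} [Nonempty ι] (F : ι → ℝ) (L U : ℝ)
    (hL : ∀ x, L ≤ F x) (hU : ∀ x, F x ≤ U) :
    L ≤ sSup (Set.range F) ∧ sSup (Set.range F) ≤ U := by
  have hbdd : BddAbove (Set.range F) := ⟨U, by rintro v ⟨x, rfl⟩; exact hU x⟩
  obtain ⟨x0⟩ := ‹Nonempty ι›
  exact ⟨(hL x0).trans (le_csSup hbdd ⟨x0, rfl⟩),
    csSup_le (Set.range_nonempty F) (by rintro v ⟨x, rfl⟩; exact hU x)⟩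

/- ===== end auxiliary lemmas ===== -/

/-- The channel information matrix of the partial-erasure channel
`W_{x*}` is diagonal, with `i`-th diagonal entry `1 + η + (1−η)/(2k−1)` if
`x* ∈ {2i−1, 2i}` and `2η` otherwise; consequently, for `η = 1/√k`, the family
`𝒲_⊥^{1/√k}` satisfies `2 ≤ ‖𝒲‖_F ≤ 2√2`, `2√k ≤ ‖𝒲‖_* ≤ 2√k + 2`, and
`1 ≤ ‖𝒲‖_op ≤ 2`. -/
theorem partial_erasure_channel_matrix_and_norms
    (k : ℕ) (hk : 2 ≤ k) :
    (∀ η : ℝ, 0 < η → η < 1 → ∀ xs : Fin (2 * k),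
      HMat k (eraseCh k η xs) = Matrix.diagonal (fun i : Fin k =>
        if xs.val / 2 = i.val then 1 + η + (1 - η) / (2 * (k : ℝ) - 1) else 2 * η)) ∧
    ∀ 𝒲 : Set (Fin (2 * k) → (Fin (2 * k) ⊕ Unit) → ℝ),
      𝒲 = { W | ∃ xs : Fin (2 * k), W = eraseCh k (Real.sqrt k)⁻¹ xs } →
      (2 ≤ famFrob k 𝒲 ∧ famFrob k 𝒲 ≤ 2 * Real.sqrt 2) ∧
        (2 * Real.sqrt k ≤ famNuc k 𝒲 ∧ famNuc k 𝒲 ≤ 2 * Real.sqrt k + 2) ∧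
        (1 ≤ famOp k 𝒲 ∧ famOp k 𝒲 ≤ 2) := by
  constructor
  · intro η hη0 hη1 xs
    exact hmat_erase k hk η hη0 hη1 xs
  · intro 𝒲 h𝒲
    subst h𝒲
    have hk2R : (2:ℝ) ≤ (k:ℝ) := by exact_mod_cast hk
    have hkpos : (0:ℝ) < (k:ℝ) := by linarith
    have hne2k : Nonempty (Fin (2*k)) := ⟨⟨0, by omega⟩⟩
    set s := Real.sqrt (k:ℝ) with hs
    have hs0 : 0 < s := Real.sqrt_pos.2 hkpos
    have hs1 : 1 < s := by
      rw [hs, show (1:ℝ) = Real.sqrt 1 by simp]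
      exact Real.sqrt_lt_sqrt (by norm_num) (by linarith)
    have hs2 : s ^ 2 = (k:ℝ) := by rw [hs]; exact Real.sq_sqrt hkpos.le
    set η := s⁻¹ with hη
    have hη0 : 0 < η := by rw [hη]; exact inv_pos.2 hs0
    have hη1 : η < 1 := by rw [hη]; exact inv_lt_one_of_one_lt₀ hs1
    have hηs : η * s = 1 := by rw [hη]; exact inv_mul_cancel₀ (ne_of_gt hs0)
    set a := 1 + η + (1 - η) / (2 * (k:ℝ) - 1) with haa
    have h2k1 : (0:ℝ) < 2 * (k:ℝ) - 1 := by linarith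
    have h1η : (0:ℝ) < 1 - η := by linarith
    have hq0 : 0 ≤ (1 - η) / (2 * (k:ℝ) - 1) := div_nonneg h1η.le h2k1.le
    have ha1 : 1 + η ≤ a := by rw [haa]; linarith
    have ha2 : a ≤ 2 := by
      have hq : (1 - η) / (2 * (k:ℝ) - 1) ≤ 1 - η := div_le_self h1η.le (by linarith)
      rw [haa]; linarith
    have ha0 : 0 < a := by linarith
    have hba : 2 * η < a := by linarith
    have hk' : (k:ℝ) = s ^ 2 := hs2.symm
    have hval : ∀ xs : Fin (2*k), HMat k (eraseCh k η xs) =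
        Matrix.diagonal (fun i : Fin k =>
          if i = (⟨xs.val / 2, by have := xs.isLt; omega⟩ : Fin k) then a else 2 * η) := by
      intro xs
      have hfun : (fun i : Fin k => if xs.val / 2 = i.val
            then 1 + η + (1 - η) / (2 * (k:ℝ) - 1) else 2 * η)
          = (fun i : Fin k =>
            if i = (⟨xs.val / 2, by have := xs.isLt; omega⟩ : Fin k) then a else 2 * η) := by
        funext i
        rw [haa]
        by_cases h : xs.val / 2 = i.val
        · rw [if_pos h, if_pos (Fin.ext h.symm)]
        · rw [if_neg h, if_neg (fun hh => h ((congrArg Fin.val hh).symm))]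
      rw [hmat_erase k hk η hη0 hη1 xs, hfun]
    have hsetr : {W : Fin (2*k) → (Fin (2*k) ⊕ Unit) → ℝ | ∃ xs, W = eraseCh k η xs}
        = Set.range (eraseCh k η) := by
      ext W; simp [eq_comm]
    have e1 : ((k:ℝ) - 1) * (2 * η) = 2 * s - 2 * η := by
      rw [hk', show (s^2 - 1) * (2*η) = 2 * (η * s) * s - 2 * η from by ring, hηs]; ring
    have e2 : ((k:ℝ) - 1) * (2 * η) ^ 2 = 4 - 4 * η ^ 2 := by
      rw [hk', show (s^2 - 1) * (2*η)^2 = 4 * (η * s)^2 - 4 * η^2 from by ring, hηs]; norm_num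
    have h2s : (2:ℝ) = Real.sqrt 4 := by
      rw [show (4:ℝ) = 2^2 by norm_num, Real.sqrt_sq (by norm_num : (0:ℝ) ≤ 2)]
    have h8 : Real.sqrt 8 = 2 * Real.sqrt 2 := by
      rw [show (8:ℝ) = 2^2 * 2 by norm_num, Real.sqrt_mul (by positivity),
        Real.sqrt_sq (by norm_num : (0:ℝ) ≤ 2)]
    have hX4 : 4 ≤ a ^ 2 + ((k:ℝ) - 1) * (2 * η) ^ 2 := by nlinarith [e2, hba, hη0, ha0]
    have hX8 : a ^ 2 + ((k:ℝ) - 1) * (2 * η) ^ 2 ≤ 8 := by nlinarith [e2, ha2, ha0, hη0]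
    refine ⟨?_, ?_, ?_⟩
    · -- Frobenius
      rw [famFrob, hsetr, ← Set.range_comp]
      exact sSup_range_bounds _ 2 (2 * Real.sqrt 2)
        (fun xs => by
          simp only [Function.comp_apply]
          rw [hval xs, frobNorm_two_valued]
          exact le_trans (le_of_eq h2s) (Real.sqrt_le_sqrt hX4))
        (fun xs => by
          simp only [Function.comp_apply]
          rw [hval xs, frobNorm_two_valued]
          exact le_trans (Real.sqrt_le_sqrt hX8) (le_of_eq h8))
    · -- nuclear
      rw [famNuc, hsetr, ← Set.range_comp]
      exact sSup_range_bounds _ (2 * s) (2 * s + 2)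
        (fun xs => by
          simp only [Function.comp_apply]
          rw [hval xs, nucNorm_two_valued _ _ _ ha0 (by linarith), e1]
          linarith)
        (fun xs => by
          simp only [Function.comp_apply]
          rw [hval xs, nucNorm_two_valued _ _ _ ha0 (by linarith), e1]
          linarith)
    · -- operator
      rw [famOp, hsetr, ← Set.range_comp]
      exact sSup_range_bounds _ 1 2
        (fun xs => by
          simp only [Function.comp_apply]
          rw [hval xs]
          exact le_trans (by linarith : (1:ℝ) ≤ a)
            (opNorm_two_valued_bounds ⟨xs.val / 2, by have := xs.isLt; omega⟩ a (2*η)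
              (by linarith) hba).1)
        (fun xs => by
          simp only [Function.comp_apply]
          rw [hval xs]
          exact le_trans
            ((opNorm_two_valued_bounds ⟨xs.val / 2, by have := xs.isLt; omega⟩ a (2*η)
              (by linarith) hba).2) (max_le ha2 (by linarith)))

end Paper
end
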